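/- If q^λ ≠ 1, then K ∩ L = 0 and L = { (h, h, …, h) : h ∈ ker(Σ_{j=0}^N B_j − (1 − q^λ)·1_m) }, where K = ⊕_{i=0}^N ker B_i and L = ker(F̂ − (1 − q^λ)·1_{(N+1)m}). -/
import Mathlib


lemma my_sum_mulVec {m N : ℕ} (B : Fin (N + 1) → Matrix (Fin m) (Fin m) ℂ)
    (h : Fin m → ℂ) :
    (∑ j, B j).mulVec h = ∑ j, (B j).mulVec h := by
  funext i
  simp [Matrix.mulVec, dotProduct, Matrix.sum_apply, Finset.sum_mul]
  rw [Finset.sum_comm]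

/-- If `q^λ ≠ 1` (written `c ≠ 1`), then `K ∩ L = 0` and
`L = {(h,…,h) : h ∈ ker(Σ_j B_j − (1 − q^λ)·1_m)}`. -/
theorem qmc_KL_lambda_nonzero (m N : ℕ) (c : ℂ) (hc : c ≠ 1)
    (B : Fin (N + 1) → Matrix (Fin m) (Fin m) ℂ)
    (K : Set (Fin (N + 1) → Fin m → ℂ))
    (hK : K = {v | ∀ i, (B i).mulVec (v i) = 0})
    (Fhat : (Fin (N + 1) → Fin m → ℂ) → (Fin (N + 1) → Fin m → ℂ))
    (hFhat : ∀ v, Fhat v = fun _ => ∑ j, (B j).mulVec (v j))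
    (L : Set (Fin (N + 1) → Fin m → ℂ))
    (hL : L = {v | Fhat v = (1 - c) • v}) :
    K ∩ L = {0} ∧
    L = {v | ∃ h : Fin m → ℂ,
      (∑ j, B j).mulVec h = (1 - c) • h ∧ v = fun _ => h} := by
  have hc' : (1 : ℂ) - c ≠ 0 := sub_ne_zero.mpr (Ne.symm hc)
  subst hK hL
  constructor
  · ext v
    simp only [Set.mem_inter_iff, Set.mem_setOf_eq, Set.mem_singleton_iff]
    constructor
    · rintro ⟨hKv, hLv⟩
      rw [hFhat] at hLv
      have h0 : ∀ i, (1 - c) • v i = 0 := by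
        intro i
        have := congrFun hLv i
        simp only [hKv, Finset.sum_const_zero] at this
        exact this.symm
      funext i
      have := h0 i
      have := smul_eq_zero.mp this
      rcases this with h | h
      · exact absurd h hc'
      · exact h
    · rintro rfl
      refine ⟨fun i => by simp [Matrix.mulVec_zero], ?_⟩
      rw [hFhat]
      funext i
      simp [Matrix.mulVec_zero]
  · ext v
    simp only [Set.mem_setOf_eq]
    rw [hFhat]
    constructor
    · intro hv
      refine ⟨v 0, ?_, ?_⟩
      · have hconst : ∀ i, v i = v 0 := by
          intro i
          have h1 := congrFun hv i
          have h2 := congrFun hv 0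
          have : (1 - c) • v i = (1 - c) • v 0 := h1.symm.trans h2
          exact smul_right_injective _ hc' this
        have h0 := congrFun hv 0
        rw [Pi.smul_apply] at h0
        rw [← h0, my_sum_mulVec]
        exact Finset.sum_congr rfl fun j _ => by rw [hconst j]
      · funext i
        have h1 := congrFun hv i
        have h2 := congrFun hv 0
        exact smul_right_injective _ hc' (h1.symm.trans h2)
    · rintro ⟨h, hh, rfl⟩
      funext i
      simpa [my_sum_mulVec] using hh
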